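/- Let Ω⊊ℝ² be a bounded domain with a Whitney covering 𝒲 (constant C_𝒲) and an admissible chain structure with constants c₁,C₁. Let 0<s<ℓ. Then there is a constant C, depending only on s, ℓ, C_𝒲, c₁ and C₁, such that for every P∈𝒲 and every nonnegative G∈L¹(Ω) (extended by 0 outside Ω): Σ_{(Q,S)∈𝒲×𝒲 with P∈[Q,S]} ℓ(Q)^{ℓ−s} · ℓ(S)² · D(Q,S)^{−(2+ℓ)} · ∫_Q G dm ≤ C · ℓ(P)^{−s} · ∫_P ( MG(x) + M(MG)(x) ) dm(x). -/

import Mathlib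

open MeasureTheory Metric Set
open scoped ENNReal
open scoped Classical

noncomputable section

/-- A dyadic cube in the plane, encoded by its generation `n` (side length `2^n`) and the
lattice coordinates `k, j` of its lower-left corner. -/
abbrev Cube : Type := ℤ × ℤ × ℤ

/-- The open dyadic square associated to the code `c`. -/
def cubeSet (c : Cube) : Set ℂ :=
  {z : ℂ | (c.2.1 : ℝ) * (2:ℝ) ^ c.1 < z.re ∧ z.re < ((c.2.1 : ℝ) + 1) * (2:ℝ) ^ c.1 ∧
           (c.2.2 : ℝ) * (2:ℝ) ^ c.1 < z.im ∧ z.im < ((c.2.2 : ℝ) + 1) * (2:ℝ) ^ c.1}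

/-- Side length `ℓ(Q)` of a dyadic cube. -/
def side (c : Cube) : ℝ := (2:ℝ) ^ c.1

/-- Distance between two subsets of the plane. -/
def setDist (A B : Set ℂ) : ℝ := sInf {d : ℝ | ∃ a ∈ A, ∃ b ∈ B, d = dist a b}

/-- Long distance `D(Q,S) = diam Q + diam S + dist(Q,S)`. -/
def longDist (q s : Cube) : ℝ :=
  diam (cubeSet q) + diam (cubeSet s) + setDist (cubeSet q) (cubeSet s)

/-- `W` is a Whitney covering of `Ω` with constant `Cw`: pairwise disjoint open dyadic
squares whose closures cover `Ω`, with `Cw ℓ(Q) ≤ dist(Q,∂Ω) ≤ 4 Cw ℓ(Q)`. -/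
def IsWhitney (Ω : Set ℂ) (Cw : ℝ) (W : Set Cube) : Prop :=
  (W.Pairwise fun q s => Disjoint (cubeSet q) (cubeSet s)) ∧
  Ω = ⋃ q ∈ W, closure (cubeSet q) ∧
  ∀ q ∈ W, Cw * side q ≤ setDist (cubeSet q) (frontier Ω) ∧
           setDist (cubeSet q) (frontier Ω) ≤ 4 * Cw * side q

/-- `ch`, `mid` form an admissible chain structure on the Whitney covering `W`, with
constants `c₁, C₁`. -/
def IsChainStructure (W : Set Cube) (c₁ C₁ : ℝ)
    (ch : Cube → Cube → List Cube) (mid : Cube → Cube → ℕ) : Prop :=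
  ∀ q ∈ W, ∀ s ∈ W,
    (ch q s).head? = some q ∧
    (ch q s).getLast? = some s ∧
    (∀ P ∈ ch q s, P ∈ W) ∧
    mid q s < (ch q s).length ∧
    (∀ i < (ch q s).length, i ≤ mid q s →
      c₁⁻¹ * side ((ch q s).getD i q) ≤ longDist q ((ch q s).getD i q) ∧
      longDist q ((ch q s).getD i q) ≤ c₁ * side ((ch q s).getD i q)) ∧
    (∀ i < (ch q s).length, mid q s ≤ i →
      c₁⁻¹ * side ((ch q s).getD i q) ≤ longDist ((ch q s).getD i q) s ∧
      longDist ((ch q s).getD i q) s ≤ c₁ * side ((ch q s).getD i q)) ∧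
    ((ch q s).map side).sum ≤ C₁ * longDist q s ∧
    c₁⁻¹ * longDist q s ≤ side ((ch q s).getD (mid q s) q) ∧
    side ((ch q s).getD (mid q s) q) ≤ c₁ * longDist q s ∧
    ∀ n : ℤ, (((ch q s).filter (fun P => decide (P.1 = n))).length : ℝ) ≤ C₁

/-- The (uncentered over radii, centered) Hardy–Littlewood maximal operator for
`ℝ≥0∞`-valued functions on the plane. -/
def hlMax (G : ℂ → ℝ≥0∞) (x : ℂ) : ℝ≥0∞ :=
  ⨆ r ∈ Set.Ioi (0:ℝ), (volume (ball x r))⁻¹ * ∫⁻ y in ball x r, G y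

lemma side_pos (c : Cube) : 0 < side c := zpow_pos (by norm_num) _

lemma cubeSet_nonempty (c : Cube) : (cubeSet c).Nonempty := by
  refine ⟨Complex.mk ((c.2.1 + 1/2) * (2:ℝ) ^ c.1) ((c.2.2 + 1/2) * (2:ℝ) ^ c.1), ?_⟩
  have h : (0:ℝ) < (2:ℝ) ^ c.1 := zpow_pos (by norm_num) _
  simp only [cubeSet, mem_setOf_eq]
  constructor
  · nlinarith
  constructor
  · nlinarith
  constructor
  · nlinarith
  · nlinarith

lemma measurableSet_cubeSet (c : Cube) : MeasurableSet (cubeSet c) := by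
  have : cubeSet c = (Complex.measurableEquivRealProd ⁻¹'
      (Ioo ((c.2.1 : ℝ) * (2:ℝ) ^ c.1) (((c.2.1 : ℝ) + 1) * (2:ℝ) ^ c.1) ×ˢ
       Ioo ((c.2.2 : ℝ) * (2:ℝ) ^ c.1) (((c.2.2 : ℝ) + 1) * (2:ℝ) ^ c.1))) := by
    ext z
    simp [cubeSet, Complex.measurableEquivRealProd, Complex.equivRealProd, and_assoc]
  rw [this]
  exact Complex.measurableEquivRealProd.measurable
    ((measurableSet_Ioo).prod (measurableSet_Ioo))

lemma volume_cubeSet (c : Cube) : volume (cubeSet c) = ENNReal.ofReal (side c ^ 2) := by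
  have h : cubeSet c = (Complex.measurableEquivRealProd ⁻¹'
      (Ioo ((c.2.1 : ℝ) * (2:ℝ) ^ c.1) (((c.2.1 : ℝ) + 1) * (2:ℝ) ^ c.1) ×ˢ
       Ioo ((c.2.2 : ℝ) * (2:ℝ) ^ c.1) (((c.2.2 : ℝ) + 1) * (2:ℝ) ^ c.1))) := by
    ext z
    simp [cubeSet, Complex.measurableEquivRealProd, Complex.equivRealProd, and_assoc]
  rw [h, Complex.volume_preserving_equiv_real_prod.measure_preimage
    (((measurableSet_Ioo).prod (measurableSet_Ioo)).nullMeasurableSet)]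
  rw [Measure.volume_eq_prod, Measure.prod_prod, Real.volume_Ioo, Real.volume_Ioo]
  have e1 : ((c.2.1 : ℝ) + 1) * (2:ℝ) ^ c.1 - (c.2.1 : ℝ) * (2:ℝ) ^ c.1 = side c := by
    unfold side; ring
  have e2 : ((c.2.2 : ℝ) + 1) * (2:ℝ) ^ c.1 - (c.2.2 : ℝ) * (2:ℝ) ^ c.1 = side c := by
    unfold side; ring
  rw [e1, e2, ← ENNReal.ofReal_mul (le_of_lt (side_pos c))]
  congr 1
  ring

lemma dist_le_of_mem_cubeSet {c : Cube} {z w : ℂ} (hz : z ∈ cubeSet c) (hw : w ∈ cubeSet c) :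
    dist z w ≤ 2 * side c := by
  obtain ⟨hz1, hz2, hz3, hz4⟩ := hz
  obtain ⟨hw1, hw2, hw3, hw4⟩ := hw
  have := Complex.norm_le_abs_re_add_abs_im (z - w)
  rw [Complex.dist_eq]
  have hre : |(z - w).re| ≤ side c := by
    simp only [Complex.sub_re]
    rw [abs_le]
    unfold side
    constructor <;> nlinarith
  have him : |(z - w).im| ≤ side c := by
    simp only [Complex.sub_im]
    rw [abs_le]
    unfold side
    constructor <;> nlinarith
  linarith

lemma isBounded_cubeSet (c : Cube) : Bornology.IsBounded (cubeSet c) := by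
  rw [Metric.isBounded_iff]
  exact ⟨2 * side c, fun z hz w hw => dist_le_of_mem_cubeSet hz hw⟩

lemma diam_cubeSet_le (c : Cube) : diam (cubeSet c) ≤ 2 * side c :=
  diam_le_of_forall_dist_le (by have := side_pos c; linarith)
    (fun z hz w hw => dist_le_of_mem_cubeSet hz hw)

lemma half_side_le_diam (c : Cube) : side c / 2 ≤ diam (cubeSet c) := by
  have h : (0:ℝ) < (2:ℝ) ^ c.1 := zpow_pos (by norm_num) _
  set z₁ : ℂ := Complex.mk ((c.2.1 + 1/4) * (2:ℝ) ^ c.1) ((c.2.2 + 1/2) * (2:ℝ) ^ c.1)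
  set z₂ : ℂ := Complex.mk ((c.2.1 + 3/4) * (2:ℝ) ^ c.1) ((c.2.2 + 1/2) * (2:ℝ) ^ c.1)
  have hz₁ : z₁ ∈ cubeSet c := by
    simp only [cubeSet, mem_setOf_eq, z₁]
    refine ⟨by nlinarith, by nlinarith, by nlinarith, by nlinarith⟩
  have hz₂ : z₂ ∈ cubeSet c := by
    simp only [cubeSet, mem_setOf_eq, z₂]
    refine ⟨by nlinarith, by nlinarith, by nlinarith, by nlinarith⟩
  have hdist : dist z₁ z₂ = side c / 2 := by
    rw [Complex.dist_of_im_eq (show z₁.im = z₂.im from rfl)]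
    simp only [z₁, z₂, Real.dist_eq, side]
    rw [abs_of_nonpos (by nlinarith)]
    ring
  calc side c / 2 = dist z₁ z₂ := hdist.symm
    _ ≤ diam (cubeSet c) := dist_le_diam_of_mem (isBounded_cubeSet c) hz₁ hz₂

-- setDist lemmas
lemma setDist_set_nonempty {A B : Set ℂ} (hA : A.Nonempty) (hB : B.Nonempty) :
    {d : ℝ | ∃ a ∈ A, ∃ b ∈ B, d = dist a b}.Nonempty := by
  obtain ⟨a, ha⟩ := hA; obtain ⟨b, hb⟩ := hB
  exact ⟨dist a b, a, ha, b, hb, rfl⟩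

lemma setDist_bddBelow (A B : Set ℂ) :
    BddBelow {d : ℝ | ∃ a ∈ A, ∃ b ∈ B, d = dist a b} := by
  refine ⟨0, fun d hd => ?_⟩
  obtain ⟨a, _, b, _, rfl⟩ := hd
  exact dist_nonneg

lemma setDist_nonneg {A B : Set ℂ} (hA : A.Nonempty) (hB : B.Nonempty) : 0 ≤ setDist A B :=
  le_csInf (setDist_set_nonempty hA hB) (fun d hd => by
    obtain ⟨a, _, b, _, rfl⟩ := hd; exact dist_nonneg)

lemma setDist_le {A B : Set ℂ} {a b : ℂ} (ha : a ∈ A) (hb : b ∈ B) :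
    setDist A B ≤ dist a b :=
  csInf_le (setDist_bddBelow A B) ⟨a, ha, b, hb, rfl⟩

lemma setDist_comm (A B : Set ℂ) : setDist A B = setDist B A := by
  unfold setDist
  congr 1
  ext d
  constructor
  · rintro ⟨a, ha, b, hb, rfl⟩; exact ⟨b, hb, a, ha, dist_comm a b⟩
  · rintro ⟨b, hb, a, ha, rfl⟩; exact ⟨a, ha, b, hb, dist_comm b a⟩

lemma exists_setDist_approx {A B : Set ℂ} (hA : A.Nonempty) (hB : B.Nonempty) {ε : ℝ}
    (hε : 0 < ε) : ∃ a ∈ A, ∃ b ∈ B, dist a b < setDist A B + ε := by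
  have h := exists_lt_of_csInf_lt (setDist_set_nonempty hA hB)
    (show sInf {d : ℝ | ∃ a ∈ A, ∃ b ∈ B, d = dist a b} < setDist A B + ε by
      unfold setDist; linarith [le_refl (sInf {d : ℝ | ∃ a ∈ A, ∃ b ∈ B, d = dist a b})])
  obtain ⟨d, ⟨a, ha, b, hb, rfl⟩, hlt⟩ := h
  exact ⟨a, ha, b, hb, hlt⟩


-- longDist lemmas
lemma diam_le_longDist_left (q s : Cube) : diam (cubeSet q) ≤ longDist q s := by
  unfold longDist
  have h1 := diam_nonneg (s := cubeSet s)
  have h2 := setDist_nonneg (cubeSet_nonempty q) (cubeSet_nonempty s)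
  linarith

lemma diam_le_longDist_right (q s : Cube) : diam (cubeSet s) ≤ longDist q s := by
  unfold longDist
  have h1 := diam_nonneg (s := cubeSet q)
  have h2 := setDist_nonneg (cubeSet_nonempty q) (cubeSet_nonempty s)
  linarith

lemma longDist_pos (q s : Cube) : 0 < longDist q s :=
  lt_of_lt_of_le (by have := side_pos q; linarith : (0:ℝ) < side q / 2)
    (le_trans (half_side_le_diam q) (diam_le_longDist_left q s))

lemma side_le_two_longDist_left (q s : Cube) : side q ≤ 2 * longDist q s := by
  have := half_side_le_diam q
  have := diam_le_longDist_left q s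
  linarith

lemma side_le_two_longDist_right (q s : Cube) : side s ≤ 2 * longDist q s := by
  have := half_side_le_diam s
  have := diam_le_longDist_right q s
  linarith

lemma longDist_comm (q s : Cube) : longDist q s = longDist s q := by
  unfold longDist
  rw [setDist_comm]
  ring

lemma dist_le_longDist {q s : Cube} {x y : ℂ} (hx : x ∈ cubeSet q) (hy : y ∈ cubeSet s) :
    dist x y ≤ longDist q s := by
  refine le_of_forall_pos_le_add (fun ε hε => ?_)
  obtain ⟨a, ha, b, hb, hab⟩ :=
    exists_setDist_approx (cubeSet_nonempty q) (cubeSet_nonempty s) hε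
  have h1 : dist x y ≤ dist x a + dist a b + dist b y := dist_triangle4 x a b y
  have h2 : dist x a ≤ diam (cubeSet q) := dist_le_diam_of_mem (isBounded_cubeSet q) hx ha
  have h3 : dist b y ≤ diam (cubeSet s) := dist_le_diam_of_mem (isBounded_cubeSet s) hb hy
  unfold longDist
  linarith

lemma longDist_triangle (a b c : Cube) : longDist a c ≤ longDist a b + longDist b c := by
  have key : setDist (cubeSet a) (cubeSet c) ≤
      setDist (cubeSet a) (cubeSet b) + diam (cubeSet b) + setDist (cubeSet b) (cubeSet c) := by
    refine le_of_forall_pos_le_add (fun ε hε => ?_)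
    have hε2 : 0 < ε / 2 := by linarith
    obtain ⟨x, hx, y, hy, hxy⟩ :=
      exists_setDist_approx (cubeSet_nonempty a) (cubeSet_nonempty b) hε2
    obtain ⟨y', hy', z, hz, hyz⟩ :=
      exists_setDist_approx (cubeSet_nonempty b) (cubeSet_nonempty c) hε2
    have h1 : setDist (cubeSet a) (cubeSet c) ≤ dist x z := setDist_le hx hz
    have h2 : dist x z ≤ dist x y + dist y y' + dist y' z := dist_triangle4 x y y' z
    have h3 : dist y y' ≤ diam (cubeSet b) := dist_le_diam_of_mem (isBounded_cubeSet b) hy hy'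
    linarith
  unfold longDist
  have hb := diam_nonneg (s := cubeSet b)
  linarith

-- rectangle volume and ball volume
lemma volume_rect (a b c d : ℝ) :
    volume {z : ℂ | a < z.re ∧ z.re < b ∧ c < z.im ∧ z.im < d} =
      ENNReal.ofReal (b - a) * ENNReal.ofReal (d - c) := by
  have h : {z : ℂ | a < z.re ∧ z.re < b ∧ c < z.im ∧ z.im < d} =
      (Complex.measurableEquivRealProd ⁻¹' (Ioo a b ×ˢ Ioo c d)) := by
    ext z
    simp [Complex.measurableEquivRealProd, Complex.equivRealProd, and_assoc]
  rw [h, Complex.volume_preserving_equiv_real_prod.measure_preimage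
    (((measurableSet_Ioo).prod (measurableSet_Ioo)).nullMeasurableSet)]
  rw [Measure.volume_eq_prod, Measure.prod_prod, Real.volume_Ioo, Real.volume_Ioo]

lemma volume_ball_le (x : ℂ) (r : ℝ) : volume (ball x r) ≤ ENNReal.ofReal (4 * r ^ 2) := by
  rcases le_or_gt r 0 with hr | hr
  · rw [ball_eq_empty.2 hr]
    simp
  have hsub : ball x r ⊆ {z : ℂ | x.re - r < z.re ∧ z.re < x.re + r ∧
      x.im - r < z.im ∧ z.im < x.im + r} := by
    intro z hz
    rw [mem_ball, Complex.dist_eq] at hz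
    have hre := Complex.abs_re_le_norm (z - x)
    have him := Complex.abs_im_le_norm (z - x)
    simp only [Complex.sub_re, Complex.sub_im] at hre him
    rw [abs_le] at hre him
    constructor
    · linarith [hre.1, hre.2]
    refine ⟨by linarith [hre.2], by linarith [him.1], by linarith [him.2]⟩
  calc volume (ball x r) ≤ _ := measure_mono hsub
    _ = ENNReal.ofReal (x.re + r - (x.re - r)) * ENNReal.ofReal (x.im + r - (x.im - r)) :=
        volume_rect _ _ _ _
    _ ≤ ENNReal.ofReal (4 * r ^ 2) := by
        rw [show x.re + r - (x.re - r) = 2 * r by ring, show x.im + r - (x.im - r) = 2 * r by ring,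
          ← ENNReal.ofReal_mul (by linarith)]
        apply ENNReal.ofReal_le_ofReal
        nlinarith

lemma hlMax_def' (F : ℂ → ℝ≥0∞) (x : ℂ) {r : ℝ} (hr : 0 < r) :
    (volume (ball x r))⁻¹ * ∫⁻ y in ball x r, F y ≤ hlMax F x :=
  le_iSup₂ (f := fun r (_ : r ∈ Set.Ioi (0:ℝ)) =>
    (volume (ball x r))⁻¹ * ∫⁻ y in ball x r, F y) r hr

lemma lintegral_ball_le_hlMax (F : ℂ → ℝ≥0∞) (x : ℂ) {r : ℝ} (hr : 0 < r) :
    ∫⁻ y in ball x r, F y ≤ ENNReal.ofReal (4 * r ^ 2) * hlMax F x := by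
  have h0 : volume (ball x r) ≠ 0 := (measure_ball_pos volume x hr).ne'
  have htop : volume (ball x r) ≠ ⊤ :=
    (lt_of_le_of_lt (volume_ball_le x r) ENNReal.ofReal_lt_top).ne
  calc ∫⁻ y in ball x r, F y
      = volume (ball x r) * ((volume (ball x r))⁻¹ * ∫⁻ y in ball x r, F y) := by
        rw [← mul_assoc, ENNReal.mul_inv_cancel h0 htop, one_mul]
    _ ≤ ENNReal.ofReal (4 * r ^ 2) * hlMax F x :=
        mul_le_mul' (volume_ball_le x r) (hlMax_def' F x hr)

lemma lintegral_ball_one_le (x : ℂ) {r : ℝ} (hr : 0 < r) :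
    ∫⁻ y in ball x r, (1:ℝ≥0∞) ≤ ENNReal.ofReal (4 * r ^ 2) * 1 := by
  rw [setLIntegral_const, mul_one, one_mul]
  exact volume_ball_le x r

-- core disjoint-sum lemma
lemma sum_ite_lintegral_le {𝒜 : Set Cube}
    (hdisj : 𝒜.Pairwise fun q s => Disjoint (cubeSet q) (cubeSet s))
    (F : ℂ → ℝ≥0∞) {U : Set ℂ} (hsub : ∀ q ∈ 𝒜, cubeSet q ⊆ U) :
    ∑' q : Cube, 𝒜.indicator (fun q => ∫⁻ y in cubeSet q, F y) q ≤ ∫⁻ y in U, F y := by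
  rw [← tsum_subtype]
  have hcnt : Countable ↥𝒜 := (Set.to_countable 𝒜).to_subtype
  have hpd : Pairwise (Function.onFun Disjoint fun i : ↥𝒜 => cubeSet (i : Cube)) := by
    intro i j hij
    have hne : (i : Cube) ≠ (j : Cube) := fun h => hij (Subtype.ext h)
    exact hdisj i.2 j.2 hne
  rw [← lintegral_iUnion (fun i => measurableSet_cubeSet _) hpd F]
  exact lintegral_mono_set (iUnion_subset fun i => hsub i i.2)


lemma rpow_neg_two_eq : (2:ℝ) ^ ((-2):ℝ) = 1/4 := by
  rw [show ((-2):ℝ) = ((-2:ℤ):ℝ) by norm_num, Real.rpow_intCast]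
  norm_num

lemma pow_calc (n : ℕ) {t α : ℝ} (ht : 0 < t) :
    ((2:ℝ) ^ n * t) ^ (-(2+α)) * (4 * ((2:ℝ) ^ (n+1) * t) ^ 2) =
      16 * ((2:ℝ) ^ (-α)) ^ n * t ^ (-α) := by
  induction n with
  | zero =>
      simp only [pow_zero, one_mul, zero_add, pow_one]
      have ht2 : t ^ (-(2+α)) * t ^ ((2:ℝ)) = t ^ (-α) := by
        rw [← Real.rpow_add ht]
        congr 1
        ring
      have : (4 * ((2:ℝ) * t) ^ 2) = 16 * t ^ (2:ℕ) := by ring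
      rw [this, ← Real.rpow_natCast t 2]
      push_cast
      calc t ^ (-(2+α)) * (16 * t ^ ((2:ℝ))) = 16 * (t ^ (-(2+α)) * t ^ ((2:ℝ))) := by ring
        _ = 16 * t ^ (-α) := by rw [ht2]
        _ = 16 * 1 * t ^ (-α) := by ring
  | succ n ih =>
      have h1 : (2:ℝ) ^ (n+1) * t = 2 * ((2:ℝ)^n * t) := by ring
      have h2 : (0:ℝ) < (2:ℝ)^n * t := by positivity
      have h3 : ((2:ℝ) ^ (n+1) * t) ^ (-(2+α)) =
          (2:ℝ) ^ (-(2+α)) * ((2:ℝ)^n * t) ^ (-(2+α)) := by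
        rw [h1, Real.mul_rpow (by norm_num) h2.le]
      have h4 : (4 * ((2:ℝ) ^ (n+1+1) * t) ^ 2) = 4 * (4 * ((2:ℝ) ^ (n+1) * t) ^ 2) := by ring
      have h5 : (4 * ((2:ℝ) ^ (n+1) * t) ^ 2) = 4 * (2:ℝ)^(2:ℕ) * ((2:ℝ)^n*t) ^ 2 := by ring
      have key : (2:ℝ) ^ (-(2+α)) * 4 = (2:ℝ) ^ (-α) := by
        rw [show (-(2+α)) = (-2) + (-α) by ring, Real.rpow_add (by norm_num : (0:ℝ) < 2),
          rpow_neg_two_eq]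
        ring
      calc ((2:ℝ) ^ (n+1) * t) ^ (-(2+α)) * (4 * ((2:ℝ) ^ (n+1+1) * t) ^ 2)
          = ((2:ℝ) ^ (-(2+α)) * 4) * (((2:ℝ)^n * t) ^ (-(2+α)) * (4 * ((2:ℝ) ^ (n+1) * t) ^ 2)) := by
            rw [h3, h4]; ring
        _ = (2:ℝ) ^ (-α) * (16 * ((2:ℝ) ^ (-α)) ^ n * t ^ (-α)) := by rw [key, ih]
        _ = 16 * ((2:ℝ) ^ (-α)) ^ (n+1) * t ^ (-α) := by ring

lemma master_sum {𝒜 : Set Cube}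
    (hdisj : 𝒜.Pairwise fun q s => Disjoint (cubeSet q) (cubeSet s))
    (x : ℂ) {t α : ℝ} (ht : 0 < t) (hα : 0 < α) (d : Cube → ℝ)
    (hd : ∀ q ∈ 𝒜, t ≤ d q)
    (hdd : ∀ q ∈ 𝒜, ∀ y ∈ cubeSet q, dist x y ≤ d q)
    (F : ℂ → ℝ≥0∞) (K : ℝ≥0∞)
    (hK : ∀ r : ℝ, 0 < r → ∫⁻ y in ball x r, F y ≤ ENNReal.ofReal (4 * r ^ 2) * K) :
    ∑' q : Cube,
        𝒜.indicator (fun q => ENNReal.ofReal ((d q) ^ (-(2+α))) * ∫⁻ y in cubeSet q, F y) q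
      ≤ ENNReal.ofReal (16 * (1 - (2:ℝ)^(-α))⁻¹ * t^(-α)) * K := by
  set An : ℕ → Set Cube :=
    fun n => {q ∈ 𝒜 | (2:ℝ)^n * t ≤ d q ∧ d q < (2:ℝ)^(n+1) * t} with hAn
  have hcover : ∀ q ∈ 𝒜, ∃ n : ℕ, q ∈ An n := by
    intro q hq
    have h1 : 1 ≤ d q / t := (one_le_div ht).2 (hd q hq)
    obtain ⟨n, hn1, hn2⟩ := exists_nat_pow_near h1 (by norm_num : (1:ℝ) < 2)
    exact ⟨n, hq, (le_div_iff₀ ht).1 hn1, (div_lt_iff₀ ht).1 hn2⟩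
  have step1 : ∀ q : Cube,
      𝒜.indicator (fun q => ENNReal.ofReal ((d q) ^ (-(2+α))) * ∫⁻ y in cubeSet q, F y) q ≤
      ∑' n : ℕ, (An n).indicator
        (fun q => ENNReal.ofReal ((d q) ^ (-(2+α))) * ∫⁻ y in cubeSet q, F y) q := by
    intro q
    by_cases hq : q ∈ 𝒜
    · obtain ⟨n, hn⟩ := hcover q hq
      refine le_trans (le_of_eq ?_) (ENNReal.le_tsum n)
      rw [Set.indicator_of_mem hq, Set.indicator_of_mem hn]
    · simp [Set.indicator_of_notMem hq]
  have step2 : ∀ n : ℕ,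
      (∑' q : Cube, (An n).indicator
          (fun q => ENNReal.ofReal ((d q) ^ (-(2+α))) * ∫⁻ y in cubeSet q, F y) q) ≤
      ENNReal.ofReal (((2:ℝ)^n * t) ^ (-(2+α))) * (ENNReal.ofReal (4 * ((2:ℝ)^(n+1) * t) ^ 2) * K)
      := by
    intro n
    have hrpos : (0:ℝ) < (2:ℝ)^(n+1) * t := by positivity
    have e1 : (∑' q : Cube, (An n).indicator
        (fun q => ENNReal.ofReal ((d q) ^ (-(2+α))) * ∫⁻ y in cubeSet q, F y) q) ≤
        ENNReal.ofReal (((2:ℝ)^n * t) ^ (-(2+α))) *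
          ∑' q : Cube, (An n).indicator (fun q => ∫⁻ y in cubeSet q, F y) q := by
      rw [← ENNReal.tsum_mul_left]
      apply ENNReal.tsum_le_tsum
      intro q
      by_cases hq : q ∈ An n
      · rw [Set.indicator_of_mem hq, Set.indicator_of_mem hq]
        apply mul_le_mul_left
        apply ENNReal.ofReal_le_ofReal
        exact Real.rpow_le_rpow_of_nonpos (by positivity) hq.2.1 (by linarith)
      · simp [Set.indicator_of_notMem hq]
    have e2 : (∑' q : Cube, (An n).indicator (fun q => ∫⁻ y in cubeSet q, F y) q) ≤
        ∫⁻ y in ball x ((2:ℝ)^(n+1) * t), F y := by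
      apply sum_ite_lintegral_le (hdisj.mono (sep_subset _ _)) F
      intro q hq y hy
      rw [mem_ball, dist_comm]
      exact lt_of_le_of_lt (hdd q hq.1 y hy) hq.2.2
    calc _ ≤ _ := e1
      _ ≤ _ := mul_le_mul_right (le_trans e2 (hK _ hrpos)) _
  have hr1 : (0:ℝ) ≤ (2:ℝ) ^ (-α) := Real.rpow_nonneg (by norm_num) _
  have hr2 : (2:ℝ) ^ (-α) < 1 :=
    Real.rpow_lt_one_of_one_lt_of_neg (by norm_num) (by linarith)
  calc ∑' q : Cube,
        𝒜.indicator (fun q => ENNReal.ofReal ((d q) ^ (-(2+α))) * ∫⁻ y in cubeSet q, F y) q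
      ≤ ∑' q : Cube, ∑' n : ℕ, (An n).indicator
          (fun q => ENNReal.ofReal ((d q) ^ (-(2+α))) * ∫⁻ y in cubeSet q, F y) q :=
        ENNReal.tsum_le_tsum step1
    _ = ∑' n : ℕ, ∑' q : Cube, (An n).indicator
          (fun q => ENNReal.ofReal ((d q) ^ (-(2+α))) * ∫⁻ y in cubeSet q, F y) q :=
        ENNReal.tsum_comm
    _ ≤ ∑' n : ℕ, ENNReal.ofReal (((2:ℝ)^n * t) ^ (-(2+α))) *
          (ENNReal.ofReal (4 * ((2:ℝ)^(n+1) * t) ^ 2) * K) := ENNReal.tsum_le_tsum step2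
    _ = ∑' n : ℕ, ENNReal.ofReal (16 * t^(-α)) * ENNReal.ofReal ((2:ℝ) ^ (-α)) ^ n * K := by
        apply tsum_congr
        intro n
        rw [← mul_assoc, ← ENNReal.ofReal_mul (by positivity), pow_calc n ht,
          ← ENNReal.ofReal_pow hr1, ← ENNReal.ofReal_mul (by positivity)]
        congr 2
        ring
    _ = ENNReal.ofReal (16 * t^(-α)) * (1 - ENNReal.ofReal ((2:ℝ) ^ (-α)))⁻¹ * K := by
        rw [ENNReal.tsum_mul_right, ENNReal.tsum_mul_left, ENNReal.tsum_geometric]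
    _ ≤ ENNReal.ofReal (16 * (1 - (2:ℝ)^(-α))⁻¹ * t^(-α)) * K := by
        apply mul_le_mul_left
        rw [show (1:ℝ≥0∞) = ENNReal.ofReal 1 by simp, ← ENNReal.ofReal_sub _ hr1,
          ← ENNReal.ofReal_inv_of_pos (by linarith), ← ENNReal.ofReal_mul (by positivity)]
        apply ENNReal.ofReal_le_ofReal
        rw [show 16 * (1 - (2:ℝ)^(-α))⁻¹ * t^(-α) = 16 * t^(-α) * (1 - (2:ℝ)^(-α))⁻¹ by ring]


lemma lint_one (c : Cube) :
    ∫⁻ _ in cubeSet c, (1:ℝ≥0∞) = ENNReal.ofReal (side c ^ 2) := by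
  rw [setLIntegral_const, one_mul, volume_cubeSet]

lemma rpow_neg_le_of_le {a b K e : ℝ} (ha : 0 < a) (hb : 0 < b) (hK : 0 < K) (he : 0 ≤ e)
    (h : b ≤ K * a) : a ^ (-e) ≤ K ^ e * b ^ (-e) := by
  have h1 : (K * a) ^ (-e) ≤ b ^ (-e) :=
    Real.rpow_le_rpow_of_nonpos hb h (by linarith)
  have h2 : (K * a) ^ (-e) = K ^ (-e) * a ^ (-e) := Real.mul_rpow hK.le ha.le
  have h3 : K ^ e * (K ^ (-e) * a ^ (-e)) = a ^ (-e) := by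
    rw [← mul_assoc, ← Real.rpow_add hK, add_neg_cancel, Real.rpow_zero, one_mul]
  calc a ^ (-e) = K ^ e * (K ^ (-e) * a ^ (-e)) := h3.symm
    _ = K ^ e * (K * a) ^ (-e) := by rw [h2]
    _ ≤ K ^ e * b ^ (-e) := by
        apply mul_le_mul_of_nonneg_left h1 (Real.rpow_nonneg hK.le e)


set_option maxHeartbeats 2000000 in
/-- chain summation estimate.  For every `P ∈ 𝒲` and every nonnegative
`G ∈ L¹(Ω)` extended by zero,
`Σ_{P ∈ [Q,S]} ℓ(Q)^{ℓ-s} ℓ(S)² D(Q,S)^{-(2+ℓ)} ∫_Q G ≤ C ℓ(P)^{-s} ∫_P (MG + M²G)`. -/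
theorem statement10 (s l : ℝ) (hs : 0 < s) (hsl : s < l)
    (Cw c₁ C₁ : ℝ) (hCw : 1 < Cw) (hc₁ : 1 ≤ c₁) (hC₁ : 1 ≤ C₁) :
    ∃ C : ℝ, 0 < C ∧
      ∀ Ω : Set ℂ, IsOpen Ω → IsConnected Ω → Bornology.IsBounded Ω →
      ∀ W : Set Cube, IsWhitney Ω Cw W →
      ∀ ch : Cube → Cube → List Cube, ∀ mid : Cube → Cube → ℕ,
        IsChainStructure W c₁ C₁ ch mid →
      ∀ P ∈ W, ∀ G : ℂ → ℝ, Measurable G → (∀ x, 0 ≤ G x) →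
        IntegrableOn G Ω volume → (∀ x, x ∉ Ω → G x = 0) →
        (∑' qs : {qs : Cube × Cube // qs.1 ∈ W ∧ qs.2 ∈ W ∧ P ∈ ch qs.1 qs.2},
            ENNReal.ofReal
              (side qs.1.1 ^ (l - s) * side qs.1.2 ^ 2 / longDist qs.1.1 qs.1.2 ^ (2 + l)) *
            ∫⁻ x in cubeSet qs.1.1, ENNReal.ofReal (G x))
          ≤ ENNReal.ofReal C * ENNReal.ofReal (side P ^ (-s)) *
            ∫⁻ x in cubeSet P,
              (hlMax (fun y => ENNReal.ofReal (G y)) x +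
               hlMax (hlMax (fun y => ENNReal.ofReal (G y))) x) := by

  -- positive auxiliary constants
  have h2l : (0:ℝ) < 1 - (2:ℝ) ^ (-l) := by
    have := Real.rpow_lt_one_of_one_lt_of_neg (show (1:ℝ) < 2 by norm_num)
      (show -l < 0 by linarith)
    linarith
  have h2s : (0:ℝ) < 1 - (2:ℝ) ^ (-s) := by
    have := Real.rpow_lt_one_of_one_lt_of_neg (show (1:ℝ) < 2 by norm_num)
      (show -s < 0 by linarith)
    linarith
  have hK0 : (0:ℝ) < 1 + c₁ * C₁ := by nlinarith
  have hA0 : (0:ℝ) < 2 * c₁ := by linarith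
  set c1tot : ℝ := (2*c₁)^(l-s) * (1+c₁*C₁)^(2+l) * (4*(2*c₁)^2) *
    (16*(1-(2:ℝ)^(-l))⁻¹ * (2:ℝ)^l) with hc1tot
  set c2tot : ℝ := (2:ℝ)^(l-s) * (1+c₁*C₁)^(2+l) * (4*(2*c₁)^2) *
    (16*(1-(2:ℝ)^(-s))⁻¹ * (2:ℝ)^s) with hc2tot
  have hc1tot0 : 0 < c1tot := by
    apply mul_pos
    apply mul_pos
    apply mul_pos
    · exact Real.rpow_pos_of_pos hA0 _
    · exact Real.rpow_pos_of_pos hK0 _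
    · positivity
    · have h1 : (0:ℝ) < (1-(2:ℝ)^(-l))⁻¹ := inv_pos.2 h2l
      have h2 : (0:ℝ) < (2:ℝ)^l := Real.rpow_pos_of_pos (by norm_num) _
      positivity
  have hc2tot0 : 0 < c2tot := by
    apply mul_pos
    apply mul_pos
    apply mul_pos
    · exact Real.rpow_pos_of_pos (by norm_num) _
    · exact Real.rpow_pos_of_pos hK0 _
    · positivity
    · have h1 : (0:ℝ) < (1-(2:ℝ)^(-s))⁻¹ := inv_pos.2 h2s
      have h2 : (0:ℝ) < (2:ℝ)^s := Real.rpow_pos_of_pos (by norm_num) _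
      positivity
  refine ⟨c1tot + c2tot, by linarith, ?_⟩
  intro Ω hΩo hΩc hΩb W hWh ch mid hCS P hP G hGm hGnn hGi hGz
  set F : ℂ → ℝ≥0∞ := fun y => ENNReal.ofReal (G y) with hF
  have hW := hWh.1
  set T : ℝ := side P with hTdef
  have hT0 : 0 < T := side_pos P
  set Near₁ : Set Cube := {q ∈ W | longDist q P ≤ c₁ * T} with hN1
  set Near₂ : Set Cube := {s' ∈ W | longDist P s' ≤ c₁ * T} with hN2
  set S : Set (Cube × Cube) := {qs | qs.1 ∈ W ∧ qs.2 ∈ W ∧ P ∈ ch qs.1 qs.2} with hSdef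
  set f : Cube × Cube → ℝ≥0∞ := fun qs =>
    ENNReal.ofReal (side qs.1 ^ (l - s) * side qs.2 ^ 2 / longDist qs.1 qs.2 ^ (2 + l)) *
      ∫⁻ y in cubeSet qs.1, F y with hfdef
  -- the key pointwise-in-x bound
  have key : ∀ x ∈ cubeSet P,
      (∑' p : Cube × Cube, S.indicator f p) ≤
        ENNReal.ofReal ((c1tot + c2tot) * T ^ (2-s)) * hlMax F x := by
    intro x hx
    set M : ℝ≥0∞ := hlMax F x with hM
    set g₁ : Cube × Cube → ℝ≥0∞ := fun p =>
      ENNReal.ofReal ((2*c₁*T)^(l-s) * (1+c₁*C₁)^(2+l)) *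
        Near₁.indicator (fun q => ∫⁻ y in cubeSet q, F y) p.1 *
        W.indicator (fun s' => ENNReal.ofReal ((longDist P s')^(-(2+l))) *
          ENNReal.ofReal ((side s') ^ 2)) p.2 with hg1
    set g₂ : Cube × Cube → ℝ≥0∞ := fun p =>
      ENNReal.ofReal ((2:ℝ)^(l-s) * (1+c₁*C₁)^(2+l)) *
        Near₂.indicator (fun s' => ENNReal.ofReal ((side s') ^ 2)) p.2 *
        W.indicator (fun q => ENNReal.ofReal ((longDist q P)^(-(2+s))) *
          ∫⁻ y in cubeSet q, F y) p.1 with hg2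
    -- pointwise bound on pairs
    have hpoint : ∀ p : Cube × Cube, S.indicator f p ≤ g₁ p + g₂ p := by
      intro p
      by_cases hp : p ∈ S
      · obtain ⟨hq, hs', hPch⟩ := hp
        rw [Set.indicator_of_mem (by exact ⟨hq, hs', hPch⟩)]
        obtain ⟨_, _, _, _, hleft, hright, hsum, _⟩ := hCS p.1 hq p.2 hs'
        obtain ⟨i, hi, hieq⟩ := List.mem_iff_getElem.1 hPch
        have hgetD : (ch p.1 p.2).getD i p.1 = P := by
          rw [List.getD_eq_getElem _ _ hi, hieq]
        have hD0 : 0 < longDist p.1 p.2 := longDist_pos _ _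
        have hTD : T ≤ C₁ * longDist p.1 p.2 := by
          have hmm : side P ∈ (ch p.1 p.2).map side := List.mem_map_of_mem (f := side) hPch
          have h1 : side P ≤ ((ch p.1 p.2).map side).sum :=
            List.single_le_sum (fun y hy => by
              obtain ⟨c, _, rfl⟩ := List.mem_map.1 hy
              exact (side_pos c).le) _ hmm
          calc T = side P := hTdef
            _ ≤ _ := h1
            _ ≤ C₁ * longDist p.1 p.2 := hsum
        rcases le_total i (mid p.1 p.2) with hle | hge
        · -- Q-side case
          have hnear : longDist p.1 P ≤ c₁ * T := by
            have := (hleft i hi hle).2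
            rwa [hgetD] at this
          have hq1 : p.1 ∈ Near₁ := ⟨hq, hnear⟩
          have hlps : 0 < longDist P p.2 := longDist_pos _ _
          have hlqP : 0 < longDist p.1 P := longDist_pos _ _
          have htri : longDist P p.2 ≤ (1+c₁*C₁) * longDist p.1 p.2 := by
            have t1 := longDist_triangle P p.1 p.2
            have t2 : longDist P p.1 = longDist p.1 P := longDist_comm _ _
            have t3 : c₁ * T ≤ c₁ * (C₁ * longDist p.1 p.2) :=
              mul_le_mul_of_nonneg_left hTD (by linarith)
            nlinarith
          have hXle : side p.1 ^ (l-s) * side p.2 ^ 2 / longDist p.1 p.2 ^ (2+l) ≤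
              ((2*c₁*T)^(l-s) * (1+c₁*C₁)^(2+l)) *
                ((longDist P p.2)^(-(2+l)) * (side p.2) ^ 2) := by
            rw [div_eq_mul_inv, ← Real.rpow_neg hD0.le]
            have b1 : side p.1 ^ (l-s) ≤ (2*c₁*T)^(l-s) := by
              apply Real.rpow_le_rpow (side_pos _).le _ (by linarith)
              have := side_le_two_longDist_left p.1 P
              nlinarith
            have b2 : longDist p.1 p.2 ^ (-(2+l)) ≤
                (1+c₁*C₁)^(2+l) * (longDist P p.2)^(-(2+l)) :=
              rpow_neg_le_of_le hD0 hlps hK0 (by linarith) htri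
            have hb2nn : (0:ℝ) ≤ longDist p.1 p.2 ^ (-(2+l)) :=
              Real.rpow_nonneg hD0.le _
            calc side p.1 ^ (l-s) * side p.2 ^ 2 * longDist p.1 p.2 ^ (-(2+l))
                = side p.1 ^ (l-s) * (longDist p.1 p.2 ^ (-(2+l)) * side p.2 ^ 2) := by ring
              _ ≤ (2*c₁*T)^(l-s) *
                  (((1+c₁*C₁)^(2+l) * (longDist P p.2)^(-(2+l))) * side p.2 ^ 2) := by
                  apply mul_le_mul b1 (mul_le_mul_of_nonneg_right b2 (sq_nonneg _))
                    (by positivity) (Real.rpow_nonneg (by positivity) _)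
              _ = _ := by ring
          have hstep : f p ≤ g₁ p := by
            simp only [hfdef, hg1]
            rw [Set.indicator_of_mem hq1, Set.indicator_of_mem hs']
            have h1 : ENNReal.ofReal
                (side p.1 ^ (l - s) * side p.2 ^ 2 / longDist p.1 p.2 ^ (2 + l)) ≤
                ENNReal.ofReal (((2*c₁*T)^(l-s) * (1+c₁*C₁)^(2+l)) *
                  ((longDist P p.2)^(-(2+l)) * (side p.2) ^ 2)) :=
              ENNReal.ofReal_le_ofReal hXle
            refine le_trans (mul_le_mul_left h1 _) (le_of_eq ?_)
            have hk : (0:ℝ) ≤ (2*c₁*T)^(l-s) * (1+c₁*C₁)^(2+l) :=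
              mul_nonneg (Real.rpow_nonneg (by positivity) _) (Real.rpow_nonneg hK0.le _)
            have hkl : (0:ℝ) ≤ (2*c₁*T)^(l-s) * (1+c₁*C₁)^(2+l) *
                (longDist P p.2)^(-(2+l)) := mul_nonneg hk (Real.rpow_nonneg hlps.le _)
            rw [show ((2*c₁*T)^(l-s) * (1+c₁*C₁)^(2+l)) *
                ((longDist P p.2)^(-(2+l)) * (side p.2) ^ 2) =
                ((2*c₁*T)^(l-s) * (1+c₁*C₁)^(2+l) * (longDist P p.2)^(-(2+l))) *
                (side p.2) ^ 2 from by ring,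
              ENNReal.ofReal_mul hkl, ENNReal.ofReal_mul hk]
            ring
          exact le_trans hstep le_self_add
        · -- S-side case
          have hnear : longDist P p.2 ≤ c₁ * T := by
            have := (hright i hi hge).2
            rwa [hgetD] at this
          have hs2 : p.2 ∈ Near₂ := ⟨hs', hnear⟩
          have hlqP : 0 < longDist p.1 P := longDist_pos _ _
          have htri : longDist p.1 P ≤ (1+c₁*C₁) * longDist p.1 p.2 := by
            have t1 := longDist_triangle p.1 p.2 P
            have t2 : longDist p.2 P = longDist P p.2 := longDist_comm _ _
            have t3 : c₁ * T ≤ c₁ * (C₁ * longDist p.1 p.2) :=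
              mul_le_mul_of_nonneg_left hTD (by linarith)
            nlinarith
          have hXle : side p.1 ^ (l-s) * side p.2 ^ 2 / longDist p.1 p.2 ^ (2+l) ≤
              ((2:ℝ)^(l-s) * (1+c₁*C₁)^(2+l)) *
                ((side p.2) ^ 2 * (longDist p.1 P)^(-(2+s))) := by
            rw [div_eq_mul_inv, ← Real.rpow_neg hD0.le]
            have b1 : side p.1 ^ (l-s) ≤ (2:ℝ)^(l-s) * (longDist p.1 P)^(l-s) := by
              rw [← Real.mul_rpow (by norm_num) hlqP.le]
              apply Real.rpow_le_rpow (side_pos _).le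
                (side_le_two_longDist_left p.1 P) (by linarith)
            have b2 : longDist p.1 p.2 ^ (-(2+l)) ≤
                (1+c₁*C₁)^(2+l) * (longDist p.1 P)^(-(2+l)) :=
              rpow_neg_le_of_le hD0 hlqP hK0 (by linarith) htri
            have hcollapse : (longDist p.1 P)^(l-s) * (longDist p.1 P)^(-(2+l)) =
                (longDist p.1 P)^(-(2+s)) := by
              rw [← Real.rpow_add hlqP]
              congr 1
              ring
            calc side p.1 ^ (l-s) * side p.2 ^ 2 * longDist p.1 p.2 ^ (-(2+l))
                = side p.1 ^ (l-s) * (longDist p.1 p.2 ^ (-(2+l)) * side p.2 ^ 2) := by ring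
              _ ≤ ((2:ℝ)^(l-s) * (longDist p.1 P)^(l-s)) *
                  (((1+c₁*C₁)^(2+l) * (longDist p.1 P)^(-(2+l))) * side p.2 ^ 2) := by
                  apply mul_le_mul b1 (mul_le_mul_of_nonneg_right b2 (sq_nonneg _))
                    (by positivity) (by positivity)
              _ = ((2:ℝ)^(l-s) * (1+c₁*C₁)^(2+l)) * (side p.2 ^ 2 *
                  ((longDist p.1 P)^(l-s) * (longDist p.1 P)^(-(2+l)))) := by ring
              _ = _ := by rw [hcollapse]
          have hstep : f p ≤ g₂ p := by
            simp only [hfdef, hg2]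
            rw [Set.indicator_of_mem hs2, Set.indicator_of_mem hq]
            have h1 : ENNReal.ofReal
                (side p.1 ^ (l - s) * side p.2 ^ 2 / longDist p.1 p.2 ^ (2 + l)) ≤
                ENNReal.ofReal (((2:ℝ)^(l-s) * (1+c₁*C₁)^(2+l)) *
                  ((side p.2) ^ 2 * (longDist p.1 P)^(-(2+s)))) :=
              ENNReal.ofReal_le_ofReal hXle
            refine le_trans (mul_le_mul_left h1 _) (le_of_eq ?_)
            have hk : (0:ℝ) ≤ (2:ℝ)^(l-s) * (1+c₁*C₁)^(2+l) :=
              mul_nonneg (Real.rpow_nonneg (by norm_num) _) (Real.rpow_nonneg hK0.le _)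
            have hks : (0:ℝ) ≤ (2:ℝ)^(l-s) * (1+c₁*C₁)^(2+l) * (side p.2)^2 :=
              mul_nonneg hk (sq_nonneg _)
            rw [show ((2:ℝ)^(l-s) * (1+c₁*C₁)^(2+l)) *
                ((side p.2) ^ 2 * (longDist p.1 P)^(-(2+s))) =
                ((2:ℝ)^(l-s) * (1+c₁*C₁)^(2+l) * (side p.2)^2) *
                (longDist p.1 P)^(-(2+s)) from by ring,
              ENNReal.ofReal_mul hks, ENNReal.ofReal_mul hk]
            ring
          exact le_trans hstep le_add_self
      · rw [Set.indicator_of_notMem hp]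
        exact zero_le
    -- the four sums
    have hc₁T : (0:ℝ) < 2*c₁*T := by nlinarith
    have hA : (∑' q : Cube, Near₁.indicator (fun q => ∫⁻ y in cubeSet q, F y) q) ≤
        ENNReal.ofReal (4*(2*c₁*T)^2) * M := by
      have hsub : ∀ q ∈ Near₁, cubeSet q ⊆ ball x (2*c₁*T) := by
        intro q hq' y hy
        rw [mem_ball, dist_comm]
        have h1 : dist x y ≤ longDist P q := dist_le_longDist hx hy
        rw [longDist_comm] at h1
        have h2 := hq'.2
        have h3 : c₁ * T < 2*c₁*T := by nlinarith
        calc dist x y ≤ longDist q P := h1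
          _ ≤ c₁ * T := h2
          _ < 2*c₁*T := h3
      exact le_trans (sum_ite_lintegral_le (hW.mono (fun q hq' => hq'.1)) F hsub)
        (lintegral_ball_le_hlMax F x hc₁T)
    have hB : (∑' s' : Cube, W.indicator (fun s' =>
        ENNReal.ofReal ((longDist P s')^(-(2+l))) * ENNReal.ofReal ((side s')^2)) s') ≤
        ENNReal.ofReal (16*(1-(2:ℝ)^(-l))⁻¹ * (T/2)^(-l)) * 1 := by
      have hfun : (fun s' => ENNReal.ofReal ((longDist P s')^(-(2+l))) *
          ENNReal.ofReal ((side s')^2)) = (fun s' =>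
          ENNReal.ofReal ((longDist P s')^(-(2+l))) * ∫⁻ _ in cubeSet s', (1:ℝ≥0∞)) :=
        funext fun s' => by rw [lint_one]
      rw [hfun]
      exact master_sum hW x (by linarith : (0:ℝ) < T/2) (by linarith : (0:ℝ) < l)
        (fun s' => longDist P s')
        (fun s' _ => by
          have h1 := half_side_le_diam P
          have h2 := diam_le_longDist_left P s'
          linarith)
        (fun s' _ y hy => dist_le_longDist hx hy) _ 1
        (fun r hr => lintegral_ball_one_le x hr)
    have hC : (∑' s' : Cube, Near₂.indicator (fun s' => ENNReal.ofReal ((side s')^2)) s') ≤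
        ENNReal.ofReal (4*(2*c₁*T)^2) := by
      have hfun : (fun s' : Cube => ENNReal.ofReal ((side s')^2)) =
          fun s' => ∫⁻ _ in cubeSet s', (1:ℝ≥0∞) := funext fun s' => (lint_one s').symm
      rw [hfun]
      have hsub : ∀ s' ∈ Near₂, cubeSet s' ⊆ ball x (2*c₁*T) := by
        intro s' hs' y hy
        rw [mem_ball, dist_comm]
        have h1 : dist x y ≤ longDist P s' := dist_le_longDist hx hy
        have h3 : c₁ * T < 2*c₁*T := by nlinarith
        calc dist x y ≤ longDist P s' := h1
          _ ≤ c₁ * T := hs'.2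
          _ < 2*c₁*T := h3
      refine le_trans (sum_ite_lintegral_le (hW.mono (fun q hq' => hq'.1)) _ hsub) ?_
      rw [setLIntegral_const, one_mul]
      exact volume_ball_le x _
    have hD : (∑' q : Cube, W.indicator (fun q =>
        ENNReal.ofReal ((longDist q P)^(-(2+s))) * ∫⁻ y in cubeSet q, F y) q) ≤
        ENNReal.ofReal (16*(1-(2:ℝ)^(-s))⁻¹ * (T/2)^(-s)) * M :=
      master_sum hW x (by linarith : (0:ℝ) < T/2) hs (fun q => longDist q P)
        (fun q _ => by
          have h1 := half_side_le_diam P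
          have h2 := diam_le_longDist_right q P
          linarith)
        (fun q _ y hy => by
          have h1 : dist x y ≤ longDist P q := dist_le_longDist hx hy
          rwa [longDist_comm] at h1) F M
        (fun r hr => lintegral_ball_le_hlMax F x hr)
    -- factor the product sums
    have hg1sum : (∑' p : Cube × Cube, g₁ p) =
        ENNReal.ofReal ((2*c₁*T)^(l-s) * (1+c₁*C₁)^(2+l)) *
          (∑' q : Cube, Near₁.indicator (fun q => ∫⁻ y in cubeSet q, F y) q) *
          (∑' s' : Cube, W.indicator (fun s' =>
            ENNReal.ofReal ((longDist P s')^(-(2+l))) * ENNReal.ofReal ((side s')^2)) s') := by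
      rw [ENNReal.tsum_prod']
      simp only [hg1]
      calc ∑' (a : Cube) (b : Cube),
            ENNReal.ofReal ((2*c₁*T)^(l-s) * (1+c₁*C₁)^(2+l)) *
              Near₁.indicator (fun q => ∫⁻ y in cubeSet q, F y) a *
              W.indicator (fun s' => ENNReal.ofReal ((longDist P s')^(-(2+l))) *
                ENNReal.ofReal ((side s')^2)) b
          = ∑' (a : Cube), (ENNReal.ofReal ((2*c₁*T)^(l-s) * (1+c₁*C₁)^(2+l)) *
              (∑' s' : Cube, W.indicator (fun s' =>
                ENNReal.ofReal ((longDist P s')^(-(2+l))) *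
                ENNReal.ofReal ((side s')^2)) s')) *
              Near₁.indicator (fun q => ∫⁻ y in cubeSet q, F y) a := by
            apply tsum_congr
            intro a
            rw [ENNReal.tsum_mul_left]
            ring
        _ = _ := by
            rw [ENNReal.tsum_mul_left]
            ring
    have hg2sum : (∑' p : Cube × Cube, g₂ p) =
        ENNReal.ofReal ((2:ℝ)^(l-s) * (1+c₁*C₁)^(2+l)) *
          (∑' s' : Cube, Near₂.indicator (fun s' => ENNReal.ofReal ((side s')^2)) s') *
          (∑' q : Cube, W.indicator (fun q =>
            ENNReal.ofReal ((longDist q P)^(-(2+s))) * ∫⁻ y in cubeSet q, F y) q) := by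
      rw [ENNReal.tsum_prod']
      simp only [hg2]
      calc ∑' (a : Cube) (b : Cube),
            ENNReal.ofReal ((2:ℝ)^(l-s) * (1+c₁*C₁)^(2+l)) *
              Near₂.indicator (fun s' => ENNReal.ofReal ((side s')^2)) b *
              W.indicator (fun q => ENNReal.ofReal ((longDist q P)^(-(2+s))) *
                ∫⁻ y in cubeSet q, F y) a
          = ∑' (a : Cube), (ENNReal.ofReal ((2:ℝ)^(l-s) * (1+c₁*C₁)^(2+l)) *
              (∑' s' : Cube, Near₂.indicator (fun s' => ENNReal.ofReal ((side s')^2)) s')) *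
              W.indicator (fun q => ENNReal.ofReal ((longDist q P)^(-(2+s))) *
                ∫⁻ y in cubeSet q, F y) a := by
            apply tsum_congr
            intro a
            rw [show (fun b => ENNReal.ofReal ((2:ℝ)^(l-s) * (1+c₁*C₁)^(2+l)) *
              Near₂.indicator (fun s' => ENNReal.ofReal ((side s')^2)) b *
              W.indicator (fun q => ENNReal.ofReal ((longDist q P)^(-(2+s))) *
                ∫⁻ y in cubeSet q, F y) a) = (fun b =>
              (ENNReal.ofReal ((2:ℝ)^(l-s) * (1+c₁*C₁)^(2+l)) *
                W.indicator (fun q => ENNReal.ofReal ((longDist q P)^(-(2+s))) *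
                  ∫⁻ y in cubeSet q, F y) a) *
              Near₂.indicator (fun s' => ENNReal.ofReal ((side s')^2)) b)
              from funext fun b => by ring]
            rw [ENNReal.tsum_mul_left]
            try ring
        _ = _ := by
            rw [ENNReal.tsum_mul_left]
            try ring
    -- real power collapses
    have hk1 : (0:ℝ) ≤ (2*c₁*T)^(l-s) * (1+c₁*C₁)^(2+l) :=
      mul_nonneg (Real.rpow_nonneg (by positivity) _) (Real.rpow_nonneg hK0.le _)
    have hk2 : (0:ℝ) ≤ (2:ℝ)^(l-s) * (1+c₁*C₁)^(2+l) :=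
      mul_nonneg (Real.rpow_nonneg (by norm_num) _) (Real.rpow_nonneg hK0.le _)
    have hmulT : (2*c₁*T)^(l-s) = (2*c₁)^(l-s) * T^(l-s) := Real.mul_rpow hA0.le hT0.le
    have hhalfl : (T/2)^(-l) = T^(-l) * (2:ℝ)^l := by
      rw [div_eq_mul_inv, Real.mul_rpow hT0.le (by norm_num : (0:ℝ) ≤ 2⁻¹),
        Real.inv_rpow (by norm_num : (0:ℝ) ≤ 2), ← Real.rpow_neg (by norm_num : (0:ℝ) ≤ 2),
        neg_neg]
    have hhalfs : (T/2)^(-s) = T^(-s) * (2:ℝ)^s := by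
      rw [div_eq_mul_inv, Real.mul_rpow hT0.le (by norm_num : (0:ℝ) ≤ 2⁻¹),
        Real.inv_rpow (by norm_num : (0:ℝ) ≤ 2), ← Real.rpow_neg (by norm_num : (0:ℝ) ≤ 2),
        neg_neg]
    have hTT : T^(l-s) * (T^(2:ℕ) * T^(-l)) = T^(2-s) := by
      rw [← Real.rpow_natCast T 2, ← Real.rpow_add hT0, ← Real.rpow_add hT0]
      congr 1
      push_cast
      ring
    have hTT2 : (T:ℝ)^(2:ℕ) * T^(-s) = T^(2-s) := by
      rw [← Real.rpow_natCast T 2, ← Real.rpow_add hT0]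
      congr 1
      try push_cast
      try ring
    have eq1real : (2*c₁*T)^(l-s) * (1+c₁*C₁)^(2+l) * (4*(2*c₁*T)^2) *
        (16*(1-(2:ℝ)^(-l))⁻¹ * (T/2)^(-l)) = c1tot * T^(2-s) := by
      rw [hc1tot, hmulT, hhalfl, ← hTT]
      ring
    have eq2real : (2:ℝ)^(l-s) * (1+c₁*C₁)^(2+l) * (4*(2*c₁*T)^2) *
        (16*(1-(2:ℝ)^(-s))⁻¹ * (T/2)^(-s)) = c2tot * T^(2-s) := by
      rw [hc2tot, hhalfs, ← hTT2]
      ring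
    -- combine
    have hg1le : (∑' p : Cube × Cube, g₁ p) ≤ ENNReal.ofReal (c1tot * T^(2-s)) * M := by
      rw [hg1sum]
      calc ENNReal.ofReal ((2*c₁*T)^(l-s) * (1+c₁*C₁)^(2+l)) *
            (∑' q : Cube, Near₁.indicator (fun q => ∫⁻ y in cubeSet q, F y) q) *
            (∑' s' : Cube, W.indicator (fun s' =>
              ENNReal.ofReal ((longDist P s')^(-(2+l))) * ENNReal.ofReal ((side s')^2)) s')
          ≤ ENNReal.ofReal ((2*c₁*T)^(l-s) * (1+c₁*C₁)^(2+l)) *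
            (ENNReal.ofReal (4*(2*c₁*T)^2) * M) *
            (ENNReal.ofReal (16*(1-(2:ℝ)^(-l))⁻¹ * (T/2)^(-l)) * 1) :=
            mul_le_mul' (mul_le_mul_right hA _) hB
        _ = ENNReal.ofReal (c1tot * T^(2-s)) * M := by
            rw [mul_one, show ENNReal.ofReal ((2*c₁*T)^(l-s) * (1+c₁*C₁)^(2+l)) *
              (ENNReal.ofReal (4*(2*c₁*T)^2) * M) *
              ENNReal.ofReal (16*(1-(2:ℝ)^(-l))⁻¹ * (T/2)^(-l)) =
              ENNReal.ofReal ((2*c₁*T)^(l-s) * (1+c₁*C₁)^(2+l)) *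
              ENNReal.ofReal (4*(2*c₁*T)^2) *
              ENNReal.ofReal (16*(1-(2:ℝ)^(-l))⁻¹ * (T/2)^(-l)) * M from by ring,
              ← ENNReal.ofReal_mul hk1, ← ENNReal.ofReal_mul (mul_nonneg hk1 (by positivity)),
              eq1real]
    have hg2le : (∑' p : Cube × Cube, g₂ p) ≤ ENNReal.ofReal (c2tot * T^(2-s)) * M := by
      rw [hg2sum]
      calc ENNReal.ofReal ((2:ℝ)^(l-s) * (1+c₁*C₁)^(2+l)) *
            (∑' s' : Cube, Near₂.indicator (fun s' => ENNReal.ofReal ((side s')^2)) s') *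
            (∑' q : Cube, W.indicator (fun q =>
              ENNReal.ofReal ((longDist q P)^(-(2+s))) * ∫⁻ y in cubeSet q, F y) q)
          ≤ ENNReal.ofReal ((2:ℝ)^(l-s) * (1+c₁*C₁)^(2+l)) *
            ENNReal.ofReal (4*(2*c₁*T)^2) *
            (ENNReal.ofReal (16*(1-(2:ℝ)^(-s))⁻¹ * (T/2)^(-s)) * M) :=
            mul_le_mul' (mul_le_mul_right hC _) hD
        _ = ENNReal.ofReal (c2tot * T^(2-s)) * M := by
            rw [show ENNReal.ofReal ((2:ℝ)^(l-s) * (1+c₁*C₁)^(2+l)) *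
              ENNReal.ofReal (4*(2*c₁*T)^2) *
              (ENNReal.ofReal (16*(1-(2:ℝ)^(-s))⁻¹ * (T/2)^(-s)) * M) =
              ENNReal.ofReal ((2:ℝ)^(l-s) * (1+c₁*C₁)^(2+l)) *
              ENNReal.ofReal (4*(2*c₁*T)^2) *
              ENNReal.ofReal (16*(1-(2:ℝ)^(-s))⁻¹ * (T/2)^(-s)) * M from by ring,
              ← ENNReal.ofReal_mul hk2, ← ENNReal.ofReal_mul (mul_nonneg hk2 (by positivity)),
              eq2real]
    calc (∑' p : Cube × Cube, S.indicator f p)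
        ≤ ∑' p : Cube × Cube, (g₁ p + g₂ p) := ENNReal.tsum_le_tsum hpoint
      _ = (∑' p : Cube × Cube, g₁ p) + (∑' p : Cube × Cube, g₂ p) := ENNReal.tsum_add
      _ ≤ ENNReal.ofReal (c1tot * T^(2-s)) * M + ENNReal.ofReal (c2tot * T^(2-s)) * M :=
          add_le_add hg1le hg2le
      _ = ENNReal.ofReal ((c1tot + c2tot) * T^(2-s)) * M := by
          rw [← add_mul, ← ENNReal.ofReal_add (by positivity) (by positivity)]
          congr 2
          ring
  -- final integration over P
  have hvol : volume (cubeSet P) = ENNReal.ofReal (T^2) := volume_cubeSet P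
  have hvol0 : ENNReal.ofReal ((T:ℝ)^2) ≠ 0 := by
    rw [← hvol]
    rw [hvol]
    exact (ENNReal.ofReal_pos.2 (by positivity)).ne'
  set I : ℝ≥0∞ := ∑' p : Cube × Cube, S.indicator f p with hIdef
  have hIle : I * ENNReal.ofReal (T^2) ≤
      ENNReal.ofReal ((c1tot+c2tot) * T^(2-s)) * ∫⁻ x in cubeSet P, hlMax F x := by
    calc I * ENNReal.ofReal (T^2) = ∫⁻ _ in cubeSet P, I := by rw [setLIntegral_const, hvol]
      _ ≤ ∫⁻ x in cubeSet P, ENNReal.ofReal ((c1tot+c2tot) * T^(2-s)) * hlMax F x :=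
          lintegral_mono_ae ((ae_restrict_iff' (measurableSet_cubeSet P)).2 (ae_of_all _ key))
      _ = _ := lintegral_const_mul' _ _ ENNReal.ofReal_ne_top
  have hIdiv : I ≤ (ENNReal.ofReal ((c1tot+c2tot) * T^(2-s)) *
      ∫⁻ x in cubeSet P, hlMax F x) / ENNReal.ofReal (T^2) :=
    (ENNReal.le_div_iff_mul_le (Or.inl hvol0) (Or.inl ENNReal.ofReal_ne_top)).2 hIle
  have hTs : (c1tot+c2tot) * T^(2-s) * (((T:ℝ)^2)⁻¹) = (c1tot+c2tot) * T^(-s) := by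
    have h2cast : ((T:ℝ)^2)⁻¹ = (T^(((2:ℕ)):ℝ))⁻¹ := by rw [Real.rpow_natCast T 2]
    rw [h2cast, ← Real.rpow_neg hT0.le, mul_assoc, ← Real.rpow_add hT0]
    congr 2
    push_cast
    ring
  have hcollapse : (ENNReal.ofReal ((c1tot+c2tot) * T^(2-s)) *
      ∫⁻ x in cubeSet P, hlMax F x) / ENNReal.ofReal (T^2) =
      ENNReal.ofReal (c1tot+c2tot) * ENNReal.ofReal (T^(-s)) *
        ∫⁻ x in cubeSet P, hlMax F x := by
    rw [div_eq_mul_inv, ← ENNReal.ofReal_inv_of_pos (by positivity : (0:ℝ) < T^2)]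
    rw [show ENNReal.ofReal ((c1tot+c2tot) * T^(2-s)) * (∫⁻ x in cubeSet P, hlMax F x) *
        ENNReal.ofReal (((T:ℝ)^2)⁻¹) =
        ENNReal.ofReal ((c1tot+c2tot) * T^(2-s)) * ENNReal.ofReal (((T:ℝ)^2)⁻¹) *
        (∫⁻ x in cubeSet P, hlMax F x) from by ring,
      ← ENNReal.ofReal_mul (by positivity), hTs,
      ENNReal.ofReal_mul (by positivity : (0:ℝ) ≤ c1tot+c2tot)]
  have hmono : (∫⁻ x in cubeSet P, hlMax F x) ≤
      ∫⁻ x in cubeSet P, (hlMax F x + hlMax (hlMax F) x) :=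
    lintegral_mono (fun x => le_self_add)
  calc (∑' qs : {qs : Cube × Cube // qs.1 ∈ W ∧ qs.2 ∈ W ∧ P ∈ ch qs.1 qs.2},
        ENNReal.ofReal
          (side qs.1.1 ^ (l - s) * side qs.1.2 ^ 2 / longDist qs.1.1 qs.1.2 ^ (2 + l)) *
        ∫⁻ y in cubeSet qs.1.1, F y)
      = I := tsum_subtype S f
    _ ≤ _ := hIdiv
    _ = ENNReal.ofReal (c1tot+c2tot) * ENNReal.ofReal (T^(-s)) *
        ∫⁻ x in cubeSet P, hlMax F x := hcollapse
    _ ≤ ENNReal.ofReal (c1tot+c2tot) * ENNReal.ofReal (T^(-s)) *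
        ∫⁻ x in cubeSet P, (hlMax F x + hlMax (hlMax F) x) := mul_le_mul_right hmono _
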